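/- Let Ω ⊆ ℂ be an open set containing the real interval [0,1], let ρ > 0, and let (g_p)_{p≥0} be functions holomorphic on Ω such that the series F(z,w) := ∑_{p≥0} g_p(z)·w^p/p! converges uniformly on every compact subset of Ω × B(0,ρ), where B(0,ρ) is the open disc of radius ρ centered at 0 in ℂ. Then F is holomorphic on Ω × B(0,ρ), and if f is a function of two complex variables analytic in a neighborhood of (0,0) such that for every p the p-th derivative in the second variable satisfies ∂_w^p f(z,0) = g_p(z) for all z in some neighborhood of 0 inside Ω, then F coincides with f on a neighborhood of (0,0). In particular, f admits an analytic continuation to Ω × B(0,ρ) whose value at (x,0) is g₀(x) and whose p-th derivative in the second variable at (x,0) is g_p(x), for every x ∈ [0,1]. -/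

import Mathlib

open Complex Metric Filter

set_option maxHeartbeats 1000000 in
/-- Analytic-continuation criterion: if the `g_p` are holomorphic on an open set `Ω`
containing `[0,1]` and the series `F(z,w) = ∑_p g_p(z) w^p/p!` converges uniformly on
compact subsets of `Ω × B(0,ρ)`, then `F` is holomorphic there; if moreover `f` is
analytic near `(0,0)` with `∂_w^p f(z,0) = g_p(z)` for `z` near `0`, then `F` coincides
with `f` near `(0,0)`; and the values and `w`-derivatives of `F` on `[0,1] × {0}` are
the `g_p`. -/
theorem analytic_continuation_criterion (Ω : Set ℂ) (hΩ : IsOpen Ω)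
    (hIcc : (Complex.ofReal '' Set.Icc 0 1) ⊆ Ω)
    (ρ : ℝ) (hρ : 0 < ρ)
    (g : ℕ → ℂ → ℂ) (hg : ∀ p, DifferentiableOn ℂ (g p) Ω)
    (F : ℂ × ℂ → ℂ)
    (hF : ∀ q : ℂ × ℂ, F q = ∑' p : ℕ, g p q.1 * q.2 ^ p / (p.factorial : ℂ))
    (hconv : ∀ K ⊆ Ω ×ˢ ball (0 : ℂ) ρ, IsCompact K →
      TendstoUniformlyOn
        (fun n (q : ℂ × ℂ) =>
          ∑ p ∈ Finset.range n, g p q.1 * q.2 ^ p / (p.factorial : ℂ))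
        F atTop K) :
    DifferentiableOn ℂ F (Ω ×ˢ ball (0 : ℂ) ρ) ∧
    (∀ f : ℂ × ℂ → ℂ,
      (∃ V ∈ nhds ((0 : ℂ), (0 : ℂ)), ∀ q ∈ V, AnalyticAt ℂ f q) →
      (∃ W ∈ nhds (0 : ℂ), W ⊆ Ω ∧
        ∀ p, ∀ z ∈ W, iteratedDeriv p (fun w => f (z, w)) 0 = g p z) →
      ∃ V ∈ nhds ((0 : ℂ), (0 : ℂ)), Set.EqOn F f V) ∧
    (∀ x : ℝ, x ∈ Set.Icc (0 : ℝ) 1 →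
      ∀ p, iteratedDeriv p (fun w => F ((x : ℂ), w)) 0 = g p (x : ℂ)) := by

  have hpt : ∀ q ∈ Ω ×ˢ ball (0 : ℂ) ρ,
      Tendsto (fun n => ∑ p ∈ Finset.range n, g p q.1 * q.2 ^ p / (p.factorial : ℂ))
        atTop (nhds (F q)) := by
    intro q hq
    have h := hconv {q} (Set.singleton_subset_iff.mpr hq) isCompact_singleton
    rwa [tendstoUniformlyOn_singleton_iff_tendsto] at h
  have hterm : ∀ q ∈ Ω ×ˢ ball (0 : ℂ) ρ,
      Tendsto (fun p : ℕ => g p q.1 * q.2 ^ p / (p.factorial : ℂ)) atTop (nhds 0) := by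
    intro q hq
    have h := hpt q hq
    have h2 := (h.comp (tendsto_add_atTop_nat 1)).sub h
    rw [sub_self] at h2
    refine h2.congr fun n => ?_
    simp [Function.comp, Finset.sum_range_succ]
  have hsum : ∀ z ∈ Ω, ∀ w ∈ ball (0 : ℂ) ρ,
      HasSum (fun p : ℕ => g p z * w ^ p / (p.factorial : ℂ)) (F (z, w)) := by
    intro z hz w hw
    rw [mem_ball_zero_iff] at hw
    set r : ℝ := (‖w‖ + ρ) / 2 with hr
    have hr0 : 0 < r := by positivity
    have hwr : ‖w‖ < r := by rw [hr]; linarith [norm_nonneg w]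
    have hrρ : r < ρ := by rw [hr]; linarith
    have hmem : (z, (r : ℂ)) ∈ Ω ×ˢ ball (0 : ℂ) ρ := by
      refine ⟨hz, ?_⟩
      simpa [mem_ball_zero_iff, Complex.norm_real, abs_of_pos hr0] using hrρ
    have h0 := (hterm (z, (r : ℂ)) hmem).norm
    rw [norm_zero] at h0
    obtain ⟨C, hC⟩ := h0.bddAbove_range
    simp only [mem_upperBounds, Set.mem_range, forall_exists_index] at hC
    have hCb : ∀ p : ℕ, ‖g p z * (r : ℂ) ^ p / (p.factorial : ℂ)‖ ≤ C := fun p => hC _ p rfl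
    have hsummable : Summable (fun p : ℕ => g p z * w ^ p / (p.factorial : ℂ)) := by
      refine Summable.of_norm_bounded (g := fun p => C * (‖w‖ / r) ^ p)
        ((summable_geometric_of_lt_one (by positivity) (by rw [div_lt_one hr0]; exact hwr)).mul_left C)
        fun p => ?_
      have hnorm : ‖g p z * w ^ p / (p.factorial : ℂ)‖
          = ‖g p z * (r : ℂ) ^ p / (p.factorial : ℂ)‖ * (‖w‖ / r) ^ p := by
        simp only [norm_div, norm_mul, norm_pow, Complex.norm_real, Real.norm_eq_abs,
          abs_of_pos hr0, div_pow]
        field_simp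
      rw [hnorm]
      exact mul_le_mul_of_nonneg_right (hCb p) (by positivity)
    have h1 := hsummable.hasSum
    have h2 := h1.tendsto_sum_nat
    have h3 := hpt (z, w) ⟨hz, by rwa [mem_ball_zero_iff]⟩
    rwa [tendsto_nhds_unique h2 h3] at h1
  have hFP : ∀ z ∈ Ω, HasFPowerSeriesAt (fun w => F (z, w))
      (FormalMultilinearSeries.ofScalars ℂ (fun p => g p z / (p.factorial : ℂ))) 0 := by
    intro z hz
    rw [hasFPowerSeriesAt_iff]
    filter_upwards [ball_mem_nhds (0 : ℂ) hρ] with w hw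
    have h := hsum z hz w hw
    have hcoeff : ∀ n : ℕ, (FormalMultilinearSeries.ofScalars ℂ
        (fun p => g p z / (p.factorial : ℂ))).coeff n = g n z / (n.factorial : ℂ) := by
      intro n
      show FormalMultilinearSeries.ofScalars ℂ _ n (fun _ => 1) = _
      rw [FormalMultilinearSeries.ofScalars_apply_eq]
      simp
    simp only [hcoeff, zero_add, smul_eq_mul]
    have he : (fun n : ℕ => w ^ n * (g n z / (n.factorial : ℂ)))
        = fun n : ℕ => g n z * w ^ n / (n.factorial : ℂ) := by
      funext n; ring
    rw [he]
    exact h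
  have hiter : ∀ z ∈ Ω, ∀ p, iteratedDeriv p (fun w => F (z, w)) 0 = g p z := by
    intro z hz p
    obtain ⟨rr, hball⟩ := hFP z hz
    have h1 := hball.factorial_smul (1 : ℂ) p
    rw [iteratedDeriv_eq_iteratedFDeriv, ← h1, FormalMultilinearSeries.ofScalars_apply_eq]
    simp only [one_pow, smul_eq_mul, mul_one, nsmul_eq_mul]
    rw [mul_div_cancel₀]
    exact_mod_cast Nat.factorial_ne_zero p
  refine ⟨?_, ?_, ?_⟩
  · rintro ⟨z₀, w₀⟩ hq0
    obtain ⟨hz₀, hw₀⟩ := hq0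
    rw [mem_ball_zero_iff] at hw₀
    obtain ⟨ε, hε, hεsub⟩ := Metric.isOpen_iff.mp hΩ z₀ hz₀
    set r : ℝ := ε / 4 with hrdef
    have hr0 : 0 < r := by positivity
    have hrsub : closedBall z₀ (2 * r) ⊆ Ω := by
      intro x hx
      rw [mem_closedBall] at hx
      exact hεsub (mem_ball.mpr (lt_of_le_of_lt hx (by rw [hrdef]; linarith)))
    set s₁ : ℝ := (‖w₀‖ + ρ) / 2 with hs₁def
    set s : ℝ := (‖w₀‖ + s₁) / 2 with hsdef
    have hs₁0 : 0 < s₁ := by positivity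
    have hws₁ : ‖w₀‖ < s₁ := by rw [hs₁def]; linarith [norm_nonneg w₀]
    have hs₁ρ : s₁ < ρ := by rw [hs₁def]; linarith
    have hs0 : 0 < s := by positivity
    have hws : ‖w₀‖ < s := by rw [hsdef]; linarith [norm_nonneg w₀]
    have hss₁ : s < s₁ := by rw [hsdef]; linarith
    set θ : ℝ := s / s₁ with hθdef
    have hθ0 : 0 ≤ θ := by positivity
    have hθ1 : θ < 1 := by rw [hθdef, div_lt_one hs₁0]; exact hss₁
    clear_value r s₁ s θ
    -- uniform bound on the coefficients
    have hKsub : closedBall z₀ (2 * r) ×ˢ ({((s₁ : ℝ) : ℂ)} : Set ℂ) ⊆ Ω ×ˢ ball (0 : ℂ) ρ := by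
      rintro ⟨a, b⟩ ⟨ha, hb⟩
      rw [Set.mem_singleton_iff] at hb
      subst hb
      exact ⟨hrsub ha, by
        rw [mem_ball_zero_iff, Complex.norm_real, Real.norm_eq_abs, abs_of_pos hs₁0]
        exact hs₁ρ⟩
    have hU := hconv _ hKsub ((isCompact_closedBall _ _).prod isCompact_singleton)
    rw [Metric.tendstoUniformlyOn_iff] at hU
    obtain ⟨N, hN⟩ := Filter.eventually_atTop.mp (hU (1/2) (by norm_num))
    have hbound1 : ∀ p, N ≤ p → ∀ z ∈ closedBall z₀ (2 * r),
        ‖g p z‖ * s₁ ^ p / (p.factorial : ℝ) ≤ 1 := by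
      intro p hp z hz
      have hmem : ((z, ((s₁ : ℝ) : ℂ)) : ℂ × ℂ) ∈ closedBall z₀ (2 * r) ×ˢ ({((s₁ : ℝ) : ℂ)} : Set ℂ) :=
        ⟨hz, rfl⟩
      have ha := hN (p + 1) (by omega) _ hmem
      have hb := hN p hp _ hmem
      have hd : dist (∑ i ∈ Finset.range (p + 1), g i z * ((s₁ : ℝ) : ℂ) ^ i / (i.factorial : ℂ))
          (∑ i ∈ Finset.range p, g i z * ((s₁ : ℝ) : ℂ) ^ i / (i.factorial : ℂ)) < 1 := by
        calc dist _ _ ≤ dist (F (z, ((s₁ : ℝ) : ℂ))) _ + dist (F (z, ((s₁ : ℝ) : ℂ))) _ :=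
          dist_triangle_left _ _ _
        _ < 1/2 + 1/2 := add_lt_add ha hb
        _ = 1 := by norm_num
      rw [Finset.sum_range_succ, dist_eq_norm, add_sub_cancel_left] at hd
      have hnorm : ‖g p z * ((s₁ : ℝ) : ℂ) ^ p / (p.factorial : ℂ)‖
          = ‖g p z‖ * s₁ ^ p / (p.factorial : ℝ) := by
        rw [norm_div, norm_mul, norm_pow, Complex.norm_real, Real.norm_eq_abs,
          abs_of_pos hs₁0, Complex.norm_natCast]
      rw [hnorm] at hd
      exact hd.le
    have hsmall : ∀ p : ℕ, ∃ Cp : ℝ, ∀ z ∈ closedBall z₀ (2 * r),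
        ‖g p z‖ * s₁ ^ p / (p.factorial : ℝ) ≤ Cp := by
      intro p
      obtain ⟨Cp, hCp⟩ := (isCompact_closedBall z₀ (2 * r)).exists_bound_of_continuousOn
        (((hg p).continuousOn).mono hrsub)
      refine ⟨Cp * s₁ ^ p / (p.factorial : ℝ), fun z hz => ?_⟩
      gcongr
      exact hCp z hz
    choose Cb hCb using hsmall
    set C : ℝ := 1 + ∑ p ∈ Finset.range N, max (Cb p) 0 with hCdef
    have hsumnn : (0 : ℝ) ≤ ∑ p ∈ Finset.range N, max (Cb p) 0 :=
      Finset.sum_nonneg fun i _ => le_max_right _ _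
    have hC1 : (1 : ℝ) ≤ C := by rw [hCdef]; linarith
    have hC0 : (0 : ℝ) < C := lt_of_lt_of_le one_pos hC1
    clear_value C
    have hC : ∀ p : ℕ, ∀ z ∈ closedBall z₀ (2 * r),
        ‖g p z‖ * s₁ ^ p / (p.factorial : ℝ) ≤ C := by
      intro p z hz
      rcases lt_or_ge p N with hp | hp
      · calc ‖g p z‖ * s₁ ^ p / (p.factorial : ℝ) ≤ Cb p := hCb p z hz
        _ ≤ max (Cb p) 0 := le_max_left _ _
        _ ≤ ∑ i ∈ Finset.range N, max (Cb i) 0 :=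
          Finset.single_le_sum (fun i _ => le_max_right (Cb i) 0) (Finset.mem_range.mpr hp)
        _ ≤ C := by rw [hCdef]; linarith
      · exact (hbound1 p hp z hz).trans hC1
    have hgB : ∀ p : ℕ, ∀ z ∈ closedBall z₀ (2 * r),
        ‖g p z‖ ≤ C * (p.factorial : ℝ) / s₁ ^ p := by
      intro p z hz
      have h := hC p z hz
      rw [div_le_iff₀ (by positivity)] at h
      rwa [le_div_iff₀ (by positivity)]
    -- Cauchy estimate for the derivatives of g p
    have hderiv : ∀ p : ℕ, ∀ z ∈ ball z₀ r,
        ‖deriv (g p) z‖ ≤ C * (p.factorial : ℝ) / s₁ ^ p / r := by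
      intro p z hz
      rw [mem_ball] at hz
      have hsub2 : closedBall z r ⊆ Ω := by
        intro x hx
        rw [mem_closedBall] at hx
        refine hrsub (mem_closedBall.mpr ?_)
        calc dist x z₀ ≤ dist x z + dist z z₀ := dist_triangle _ _ _
        _ ≤ 2 * r := by linarith
      rw [← Complex.cderiv_eq_deriv hΩ (hg p) hr0 hsub2]
      refine Complex.norm_cderiv_le hr0 fun x hx => ?_
      refine hgB p x ?_
      rw [mem_sphere] at hx
      rw [mem_closedBall]
      calc dist x z₀ ≤ dist x z + dist z z₀ := dist_triangle _ _ _
      _ ≤ 2 * r := by linarith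
    -- the term derivatives
    set L : ℕ → ℂ × ℂ → (ℂ × ℂ →L[ℂ] ℂ) := fun p q =>
      (deriv (g p) q.1 * q.2 ^ p / (p.factorial : ℂ)) • ContinuousLinearMap.fst ℂ ℂ ℂ
      + (g p q.1 * p * q.2 ^ (p - 1) / (p.factorial : ℂ)) • ContinuousLinearMap.snd ℂ ℂ ℂ
      with hLdef
    clear_value L
    have hLder : ∀ p : ℕ, ∀ q : ℂ × ℂ, q.1 ∈ Ω →
        HasFDerivAt (fun q : ℂ × ℂ => g p q.1 * q.2 ^ p / (p.factorial : ℂ)) (L p q) q := by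
      intro p q hq1
      have hgd : HasDerivAt (g p) (deriv (g p) q.1) q.1 :=
        (((hg p) q.1 hq1).differentiableAt (hΩ.mem_nhds hq1)).hasDerivAt
      have h1 : HasFDerivAt (fun q : ℂ × ℂ => g p q.1)
          (deriv (g p) q.1 • ContinuousLinearMap.fst ℂ ℂ ℂ) q :=
        hgd.comp_hasFDerivAt q hasFDerivAt_fst
      have h2 : HasFDerivAt (fun q : ℂ × ℂ => q.2 ^ p)
          (((p : ℂ) * q.2 ^ (p - 1)) • ContinuousLinearMap.snd ℂ ℂ ℂ) q :=
        (hasDerivAt_pow p q.2).comp_hasFDerivAt q hasFDerivAt_snd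
      have h4 := (h1.mul h2).const_smul ((p.factorial : ℂ)⁻¹)
      have heq : (fun q : ℂ × ℂ => g p q.1 * q.2 ^ p / (p.factorial : ℂ))
          = fun q : ℂ × ℂ => ((p.factorial : ℂ)⁻¹) • (g p q.1 * q.2 ^ p) := by
        funext q'
        rw [smul_eq_mul]
        ring
      rw [heq]
      refine h4.congr_fderiv ?_
      refine ContinuousLinearMap.ext fun v => ?_
      simp only [hLdef, ContinuousLinearMap.add_apply, ContinuousLinearMap.smul_apply,
        ContinuousLinearMap.coe_fst', ContinuousLinearMap.coe_snd', smul_eq_mul]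
      ring
    -- the bounds on the derivatives
    set u : ℕ → ℝ := fun p => C / r * θ ^ p + C / s₁ * (p * θ ^ (p - 1)) with hudef
    clear_value u
    have hu : Summable u := by
      rw [hudef]
      refine Summable.add ((summable_geometric_of_lt_one hθ0 hθ1).mul_left _) ?_
      refine Summable.mul_left _ ?_
      have h5 : Summable (fun n : ℕ => ((n : ℝ) + 1) * θ ^ n) := by
        have h6 := summable_pow_mul_geometric_of_norm_lt_one (R := ℝ) 1
          (by rwa [Real.norm_of_nonneg hθ0])
        have h7 := summable_geometric_of_lt_one hθ0 hθ1
        refine ((h6.add h7).congr fun n => ?_)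
        push_cast
        ring
      refine (summable_nat_add_iff 1).mp (h5.congr fun n => ?_)
      simp only [Nat.add_sub_cancel]
      push_cast
      ring
    have hbnd : ∀ (p : ℕ), ∀ x ∈ ball z₀ r ×ˢ ball (0 : ℂ) s, ‖L p x‖ ≤ u p := by
      rintro p ⟨z, w⟩ ⟨hz, hw⟩
      rw [mem_ball_zero_iff] at hw
      have hzc : z ∈ closedBall z₀ (2 * r) := by
        rw [mem_closedBall]
        rw [mem_ball] at hz
        linarith
      have ha : ‖deriv (g p) z * w ^ p / (p.factorial : ℂ)‖ ≤ C / r * θ ^ p := by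
        rw [norm_div, norm_mul, norm_pow, Complex.norm_natCast]
        have h1 : ‖deriv (g p) z‖ * ‖w‖ ^ p ≤ (C * (p.factorial : ℝ) / s₁ ^ p / r) * s ^ p :=
          mul_le_mul (hderiv p z hz) (pow_le_pow_left₀ (norm_nonneg w) hw.le p)
            (by positivity) (by positivity)
        calc ‖deriv (g p) z‖ * ‖w‖ ^ p / (p.factorial : ℝ)
            = ‖deriv (g p) z‖ * ‖w‖ ^ p * ((p.factorial : ℝ))⁻¹ := div_eq_mul_inv _ _
        _ ≤ (C * (p.factorial : ℝ) / s₁ ^ p / r) * s ^ p * ((p.factorial : ℝ))⁻¹ :=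
            mul_le_mul_of_nonneg_right h1 (by positivity)
        _ = C / r * θ ^ p := by
              have hfac : ((p.factorial : ℝ)) ≠ 0 := Nat.cast_ne_zero.mpr p.factorial_ne_zero
              rw [hθdef, div_pow]
              field_simp
      have hb : ‖g p z * (p : ℂ) * w ^ (p - 1) / (p.factorial : ℂ)‖
          ≤ C / s₁ * (p * θ ^ (p - 1)) := by
        rcases Nat.eq_zero_or_pos p with rfl | hp
        · simp
        · obtain ⟨n, rfl⟩ : ∃ n, p = n + 1 := ⟨p - 1, (Nat.succ_pred_eq_of_pos hp).symm⟩
          simp only [Nat.add_sub_cancel]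
          rw [norm_div, norm_mul, norm_mul, norm_pow, Complex.norm_natCast,
            Complex.norm_natCast]
          have h1 : ‖g (n + 1) z‖ * ((n + 1 : ℕ) : ℝ) * ‖w‖ ^ n
              ≤ (C * ((n + 1).factorial : ℝ) / s₁ ^ (n + 1)) * ((n + 1 : ℕ) : ℝ) * s ^ n :=
            mul_le_mul (mul_le_mul_of_nonneg_right (hgB (n + 1) z hzc) (by positivity))
              (pow_le_pow_left₀ (norm_nonneg w) hw.le n) (by positivity) (by positivity)
          calc ‖g (n + 1) z‖ * ((n + 1 : ℕ) : ℝ) * ‖w‖ ^ n / ((n + 1).factorial : ℝ)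
              = ‖g (n + 1) z‖ * ((n + 1 : ℕ) : ℝ) * ‖w‖ ^ n * (((n + 1).factorial : ℝ))⁻¹ :=
                div_eq_mul_inv _ _
          _ ≤ (C * ((n + 1).factorial : ℝ) / s₁ ^ (n + 1)) * ((n + 1 : ℕ) : ℝ) * s ^ n
                * (((n + 1).factorial : ℝ))⁻¹ := mul_le_mul_of_nonneg_right h1 (by positivity)
          _ = C / s₁ * (((n + 1 : ℕ) : ℝ) * θ ^ n) := by
                rw [hθdef, div_pow]
                have hfac : (((n + 1).factorial : ℝ)) ≠ 0 :=
                  Nat.cast_ne_zero.mpr (n + 1).factorial_ne_zero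
                field_simp
                ring
      simp only [hLdef]
      refine ContinuousLinearMap.opNorm_le_bound _ (by rw [hudef]; positivity) fun v => ?_
      simp only [ContinuousLinearMap.add_apply, ContinuousLinearMap.smul_apply,
        ContinuousLinearMap.coe_fst', ContinuousLinearMap.coe_snd', smul_eq_mul]
      calc ‖deriv (g p) z * (z, w).2 ^ p / (p.factorial : ℂ) * v.1
            + g p (z, w).1 * p * (z, w).2 ^ (p - 1) / (p.factorial : ℂ) * v.2‖
          ≤ ‖deriv (g p) z * w ^ p / (p.factorial : ℂ) * v.1‖
            + ‖g p z * (p : ℂ) * w ^ (p - 1) / (p.factorial : ℂ) * v.2‖ := norm_add_le _ _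
      _ = ‖deriv (g p) z * w ^ p / (p.factorial : ℂ)‖ * ‖v.1‖
            + ‖g p z * (p : ℂ) * w ^ (p - 1) / (p.factorial : ℂ)‖ * ‖v.2‖ := by
            rw [norm_mul, norm_mul]
      _ ≤ (C / r * θ ^ p) * ‖v‖ + (C / s₁ * (p * θ ^ (p - 1))) * ‖v‖ :=
            add_le_add
              (mul_le_mul ha (norm_fst_le v) (norm_nonneg _) (by positivity))
              (mul_le_mul hb (norm_snd_le v) (norm_nonneg _) (by positivity))
      _ = u p * ‖v‖ := by simp only [hudef]; ring
    have hDopen : IsOpen (ball z₀ r ×ˢ ball (0 : ℂ) s) := isOpen_ball.prod isOpen_ball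
    have hDsub : ball z₀ r ×ˢ ball (0 : ℂ) s ⊆ Ω ×ˢ ball (0 : ℂ) ρ := by
      rintro ⟨a, b⟩ ⟨ha, hb⟩
      refine ⟨hrsub (ball_subset_closedBall.trans (closedBall_subset_closedBall (by linarith)) ha), ?_⟩
      exact ball_subset_ball (by linarith) hb
    have hunif := tendstoUniformlyOn_tsum_nat hu hbnd
    have hmain := hasFDerivAt_of_tendstoUniformlyOn hDopen hunif
      (fun n x hx => HasFDerivAt.fun_sum fun p _ => hLder p x (hDsub hx).1)
      (fun x hx => hpt x (hDsub hx))
      (show ((z₀, w₀) : ℂ × ℂ) ∈ ball z₀ r ×ˢ ball (0 : ℂ) s from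
        ⟨mem_ball_self hr0, mem_ball_zero_iff.mpr hws⟩)
    exact hmain.differentiableAt.differentiableWithinAt
  · rintro f ⟨V, hV, hfa⟩ ⟨W, hW, hWΩ, hWder⟩
    obtain ⟨ε, hε, hballV⟩ := Metric.mem_nhds_iff.mp hV
    have hε2 : 0 < ε / 2 := by positivity
    set δ : ℝ := min (ε / 2) ρ with hδdef
    have hδ0 : 0 < δ := lt_min hε2 hρ
    refine ⟨(W ∩ ball (0 : ℂ) (ε / 2)) ×ˢ ball (0 : ℂ) δ,
      prod_mem_nhds (Filter.inter_mem hW (ball_mem_nhds _ hε2)) (ball_mem_nhds _ hδ0), ?_⟩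
    rintro ⟨z, w⟩ ⟨⟨hzW, hzb⟩, hwb⟩
    have hzΩ : z ∈ Ω := hWΩ hzW
    rw [mem_ball_zero_iff] at hzb hwb
    set R : NNReal := (ε / 2).toNNReal with hRdef
    have hRc : (R : ℝ) = ε / 2 := Real.coe_toNNReal _ hε2.le
    have hdiff : DifferentiableOn ℂ (fun w' => f (z, w')) (closedBall (0 : ℂ) R) := by
      intro w' hw'
      rw [mem_closedBall_zero_iff, hRc] at hw'
      have hmem : (z, w') ∈ ball ((0 : ℂ), (0 : ℂ)) ε := by
        rw [mem_ball, Prod.dist_eq, dist_zero_right, dist_zero_right, max_lt_iff]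
        exact ⟨hzb.trans_le (by linarith), lt_of_le_of_lt hw' (by linarith)⟩
      exact (((hfa _ (hballV hmem)).differentiableAt).comp w'
        (DifferentiableAt.prodMk (differentiableAt_const z) differentiableAt_id)).differentiableWithinAt
    have hRpos : 0 < R := Real.toNNReal_pos.mpr hε2
    have hfps := hdiff.hasFPowerSeriesOnBall hRpos
    set P := cauchyPowerSeries (fun w' => f (z, w')) 0 R with hPdef
    have hcoeff : ∀ p : ℕ, P.coeff p = g p z / (p.factorial : ℂ) := by
      intro p
      have h1 := hfps.factorial_smul (1 : ℂ) p
      have h2 := hWder p z hzW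
      rw [iteratedDeriv_eq_iteratedFDeriv] at h2
      rw [eq_div_iff (by exact_mod_cast Nat.factorial_ne_zero p : ((p.factorial : ℂ)) ≠ 0)]
      rw [← h2, ← h1]
      simp only [FormalMultilinearSeries.coeff, nsmul_eq_mul]
      exact mul_comm _ _
    have hwR : w ∈ Metric.eball (0 : ℂ) R := by
      rw [Metric.emetric_ball_nnreal, mem_ball_zero_iff, hRc]
      exact hwb.trans_le (min_le_left _ _)
    have h3 := hfps.hasSum hwR
    rw [zero_add] at h3
    have h4 : HasSum (fun p : ℕ => g p z * w ^ p / (p.factorial : ℂ)) (f (z, w)) := by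
      have he : (fun p : ℕ => P p (fun _ => w))
          = fun p : ℕ => g p z * w ^ p / (p.factorial : ℂ) := by
        funext p
        rw [FormalMultilinearSeries.apply_eq_pow_smul_coeff, hcoeff, smul_eq_mul]
        ring
      rwa [he] at h3
    exact (hsum z hzΩ w (mem_ball_zero_iff.mpr (hwb.trans_le (min_le_right _ _)))).unique h4
  · intro x hx p
    exact hiter (x : ℂ) (hIcc (Set.mem_image_of_mem _ hx)) p
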